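/- Let H ~ Exp(1), let I ≥ 0 be independent of H, let A > 0, t > 0, Tρ > 0, 0 < c_min < c_max, and set C = max(min(A·I/H, c_max), c_min). Then E[e^{−tTρ·C}] = e^{−tTρ c_max} + tTρ ∫_{1/c_max}^{1/c_min} u^{−2} e^{−tTρ/u} E[e^{−A·I·u}] du. -/

import Mathlib

open MeasureTheory ProbabilityTheory intervalIntegral Set Filter


lemma exp_interval (s : ℝ) (hs : 0 < s) (a b : ℝ) :
    ∫ w in a..b, Real.exp (-(s * w)) = (Real.exp (-(s * a)) - Real.exp (-(s * b))) / s := by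
  have hderiv : ∀ w : ℝ, HasDerivAt (fun w => -(Real.exp (-(s * w))) / s)
      (Real.exp (-(s * w))) w := by
    intro w
    have h1 : HasDerivAt (fun w : ℝ => -(s * w)) (-s) w := by
      simpa using ((hasDerivAt_id w).const_mul (-s))
    have h2 := (h1.exp.neg).div_const s
    refine h2.congr_deriv ?_
    field_simp
  rw [intervalIntegral.integral_eq_sub_of_hasDerivAt (fun w _ => hderiv w)
    ((Real.continuous_exp.comp (by continuity)).intervalIntegrable a b)]
  ring

lemma aux_ite (s : ℝ) (hs : 0 < s) (cmin cmax : ℝ) (hc0 : 0 < cmin) (hcc : cmin < cmax) (x : ℝ) :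
    (∫ w in cmin..cmax, (if x ≤ w then Real.exp (-(s * w)) else 0)) =
      (Real.exp (-(s * max (min x cmax) cmin)) - Real.exp (-(s * cmax))) / s := by
  have hle : cmin ≤ cmax := hcc.le
  have cexp : Continuous fun w : ℝ => Real.exp (-(s * w)) :=
    Real.continuous_exp.comp (by continuity)
  have feq : (fun w => if x ≤ w then Real.exp (-(s * w)) else 0)
      = (Ici x).indicator (fun w => Real.exp (-(s * w))) := by
    funext w; simp [Set.indicator_apply, Set.mem_Ici]
  rcases le_or_gt x cmin with hx | hx
  · rw [min_eq_left (hx.trans hle), max_eq_right hx]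
    rw [intervalIntegral.integral_congr (g := fun w => Real.exp (-(s * w)))
      (fun w hw => by
        rw [Set.uIcc_of_le hle] at hw
        simp [hx.trans hw.1])]
    exact exp_interval s hs cmin cmax
  rcases le_or_gt x cmax with hx2 | hx2
  · rw [min_eq_left hx2, max_eq_left hx.le]
    have hint : ∀ a b : ℝ, IntervalIntegrable
        (fun w => if x ≤ w then Real.exp (-(s * w)) else 0) volume a b := by
      intro a b
      rw [feq, intervalIntegrable_iff]
      exact (cexp.integrableOn_uIoc).indicator measurableSet_Ici
    rw [← intervalIntegral.integral_add_adjacent_intervals (b := x) (hint cmin x) (hint x cmax)]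
    have h1 : (∫ w in cmin..x, (if x ≤ w then Real.exp (-(s * w)) else 0)) = 0 := by
      rw [intervalIntegral.integral_of_le hx.le]
      rw [show (0:ℝ) = ∫ w in Set.Ioc cmin x, (0:ℝ) by simp]
      apply MeasureTheory.integral_congr_ae
      have hne : ∀ᵐ w : ℝ, w ≠ x := by
        rw [ae_iff]
        simpa using measure_singleton x
      filter_upwards [ae_restrict_of_ae hne, ae_restrict_mem measurableSet_Ioc] with w hw hmem
      have : ¬ x ≤ w := fun h => hw (le_antisymm hmem.2 h)
      simp [this]
    have h2 : (∫ w in x..cmax, (if x ≤ w then Real.exp (-(s * w)) else 0))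
        = (Real.exp (-(s * x)) - Real.exp (-(s * cmax))) / s := by
      rw [intervalIntegral.integral_congr (g := fun w => Real.exp (-(s * w)))
        (fun w hw => by
          rw [Set.uIcc_of_le hx2] at hw
          simp [hw.1])]
      exact exp_interval s hs x cmax
    rw [h1, h2, zero_add]
  · rw [min_eq_right hx2.le, max_eq_left hle]
    rw [intervalIntegral.integral_congr (g := fun _ => (0:ℝ))
      (fun w hw => by
        rw [Set.uIcc_of_le hle] at hw
        simp [not_le.2 (lt_of_le_of_lt hw.2 hx2)])]
    simp


lemma tail_ge {Ω : Type*} [MeasurableSpace Ω] (P : Measure Ω) [IsProbabilityMeasure P]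
    (H : Ω → ℝ) (hH : Measurable H)
    (hexp : ∀ h : ℝ, 0 ≤ h → P {ω | h < H ω} = ENNReal.ofReal (Real.exp (-h)))
    (a : ℝ) (ha : 0 ≤ a) : P {ω | a ≤ H ω} = ENNReal.ofReal (Real.exp (-a)) := by
  rcases eq_or_lt_of_le ha with rfl | ha
  · have h1 : P {ω | (0:ℝ) < H ω} = 1 := by simpa using hexp 0 le_rfl
    have h2 : P {ω | (0:ℝ) ≤ H ω} ≤ 1 := prob_le_one
    have h3 : (1:ENNReal) ≤ P {ω | (0:ℝ) ≤ H ω} := by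
      rw [← h1]
      apply measure_mono
      intro ω hω
      simp only [mem_setOf_eq] at hω ⊢
      exact le_of_lt hω
    have h4 : P {ω | (0:ℝ) ≤ H ω} = 1 := le_antisymm h2 h3
    simp [h4]
  · set S : ℕ → Set Ω := fun n => {ω | a - a / (n + 1) < H ω} with hS
    have hSm : ∀ n, MeasurableSet (S n) := fun n => measurableSet_lt measurable_const hH
    have hanti : Antitone S := by
      intro n m hnm ω hω
      have hc : ((n:ℝ) + 1) ≤ (m:ℝ) + 1 := by exact_mod_cast Nat.succ_le_succ hnm
      have h1 : a / ((m:ℝ) + 1) ≤ a / ((n:ℝ) + 1) := by gcongr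
      simp only [hS, mem_setOf_eq] at hω ⊢
      linarith
    have hiInter : ⋂ n, S n = {ω | a ≤ H ω} := by
      ext ω
      simp only [mem_iInter, hS, mem_setOf_eq]
      constructor
      · intro h
        by_contra hlt
        push_neg at hlt
        obtain ⟨n, hn⟩ := exists_nat_one_div_lt (div_pos (by linarith : 0 < a - H ω) ha)
        have h2 : a / ((n:ℝ) + 1) < a - H ω := by
          calc a / ((n:ℝ) + 1) = a * (1 / ((n:ℝ) + 1)) := by ring
          _ < a * ((a - H ω) / a) := mul_lt_mul_of_pos_left hn ha
          _ = a - H ω := by field_simp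
        linarith [h n]
      · intro h n
        have : 0 < a / (n + 1) := by positivity
        linarith
    have htend := tendsto_measure_iInter_atTop (μ := P) (fun n => (hSm n).nullMeasurableSet)
      hanti ⟨0, measure_ne_top _ _⟩
    rw [hiInter] at htend
    have hval : ∀ n : ℕ, P (S n) = ENNReal.ofReal (Real.exp (-(a - a / (n + 1)))) := by
      intro n
      apply hexp
      have h1 : a / (n + 1) ≤ a := by
        rw [div_le_iff₀ (by positivity : (0:ℝ) < (n:ℝ) + 1)]
        nlinarith [Nat.cast_nonneg (α := ℝ) n]
      linarith
    have htend2 : Tendsto (fun n : ℕ => P (S n)) atTop (nhds (ENNReal.ofReal (Real.exp (-a)))) := by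
      simp_rw [hval]
      apply ENNReal.tendsto_ofReal
      apply (Real.continuous_exp.tendsto _).comp
      have : Tendsto (fun n : ℕ => a / (n + 1)) atTop (nhds 0) := by
        simpa [div_eq_mul_inv] using (tendsto_const_nhds (x := a)).mul (tendsto_one_div_add_atTop_nhds_zero_nat)
      have := (tendsto_const_nhds (x := a)).sub this
      simpa using this.neg
    exact tendsto_nhds_unique htend htend2

lemma tail_laplace {Ω : Type*} [MeasurableSpace Ω] (P : Measure Ω) [IsProbabilityMeasure P]
    (H I : Ω → ℝ) (hH : Measurable H) (hI : Measurable I)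
    (hexp : ∀ h : ℝ, 0 ≤ h → P {ω | h < H ω} = ENNReal.ofReal (Real.exp (-h)))
    (hInonneg : ∀ ω, 0 ≤ I ω) (hind : IndepFun H I P) (A : ℝ) (hA : 0 < A)
    (w : ℝ) (hw : 0 < w) :
    P {ω | A * I ω / H ω ≤ w}
      = ENNReal.ofReal (∫ ω, Real.exp (-(A * I ω * (1 / w))) ∂P) := by
  have hHpos : ∀ᵐ ω ∂P, 0 < H ω := by
    have h1 : P {ω | (0:ℝ) < H ω} = 1 := by simpa using hexp 0 le_rfl
    rw [ae_iff]
    have h2 : {ω | ¬ (0:ℝ) < H ω} = {ω | (0:ℝ) < H ω}ᶜ := by ext; simp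
    rw [h2, measure_compl (measurableSet_lt measurable_const hH) (measure_ne_top _ _), h1]
    simp
  have hsetswap : P {ω | A * I ω / H ω ≤ w} = P {ω | A * I ω * (1 / w) ≤ H ω} := by
    apply measure_congr
    rw [Filter.eventuallyEq_set]
    filter_upwards [hHpos] with ω hω
    rw [div_le_iff₀ hω, show A * I ω * (1 / w) = (A * I ω) / w by ring, div_le_iff₀ hw]
    constructor <;> intro h <;> nlinarith [mul_comm w (H ω)]
  rw [hsetswap]
  have hset : MeasurableSet {p : ℝ × ℝ | A * p.1 * (1 / w) ≤ p.2} :=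
    measurableSet_le (by fun_prop) measurable_snd
  have hmap : P {ω | A * I ω * (1 / w) ≤ H ω}
      = (P.map (fun ω => (I ω, H ω))) {p : ℝ × ℝ | A * p.1 * (1 / w) ≤ p.2} := by
    rw [Measure.map_apply (hI.prodMk hH) hset]
    rfl
  rw [hmap, (indepFun_iff_map_prod_eq_prod_map_map hI.aemeasurable hH.aemeasurable).1 hind.symm,
    Measure.prod_apply hset]
  have hIae : ∀ᵐ i ∂(P.map I), 0 ≤ i := by
    rw [ae_map_iff hI.aemeasurable (measurableSet_Ici : MeasurableSet (Ici (0:ℝ)))]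
    exact ae_of_all _ hInonneg
  have hlint : ∫⁻ i, (P.map H) (Prod.mk i ⁻¹' {p : ℝ × ℝ | A * p.1 * (1 / w) ≤ p.2}) ∂(P.map I)
      = ∫⁻ i, ENNReal.ofReal (Real.exp (-(A * i * (1 / w)))) ∂(P.map I) := by
    apply lintegral_congr_ae
    filter_upwards [hIae] with i hi
    have hpre : Prod.mk i ⁻¹' {p : ℝ × ℝ | A * p.1 * (1 / w) ≤ p.2}
        = {h : ℝ | A * i * (1 / w) ≤ h} := rfl
    rw [hpre, show {h : ℝ | A * i * (1 / w) ≤ h} = Ici (A * i * (1 / w)) from rfl,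
      Measure.map_apply hH measurableSet_Ici]
    exact tail_ge P H hH hexp _ (by positivity)
  rw [hlint, lintegral_map (by fun_prop) hI]
  have hfi : Integrable (fun ω => Real.exp (-(A * I ω * (1 / w)))) P := by
    apply Integrable.mono' (integrable_const 1)
    · exact (Real.measurable_exp.comp (by fun_prop)).aestronglyMeasurable
    · apply ae_of_all
      intro ω
      rw [Real.norm_eq_abs, abs_of_pos (Real.exp_pos _)]
      apply Real.exp_le_one_iff.2
      have := hInonneg ω
      have h1 : 0 ≤ A * I ω * (1 / w) := by positivity
      linarith
  rw [← MeasureTheory.ofReal_integral_eq_lintegral_ofReal hfi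
    (ae_of_all _ fun ω => (Real.exp_pos _).le)]


/-- Let `H ~ Exp(1)`, `I ≥ 0` integrable and independent of `H`,
`A, t > 0`, `T, ρ > 0`, `0 < c_min < c_max`, and
`C = max (min (A·I/H) c_max) c_min`. Then
`E[e^{−tTρ C}] = e^{−tTρ c_max} + tTρ ∫_{1/c_max}^{1/c_min} u^{−2} e^{−tTρ/u} E[e^{−AIu}] du`. -/
theorem truncated_laplace_formula
    {Ω : Type*} [MeasurableSpace Ω] (P : Measure Ω) [IsProbabilityMeasure P]
    (H I : Ω → ℝ) (hH : Measurable H) (hI : Measurable I)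
    (hexp : ∀ h : ℝ, 0 ≤ h → P {ω | h < H ω} = ENNReal.ofReal (Real.exp (-h)))
    (hInonneg : ∀ ω, 0 ≤ I ω) (hIint : Integrable I P)
    (hind : IndepFun H I P)
    (A t T ρ : ℝ) (hA : 0 < A) (ht : 0 < t) (hT : 0 < T) (hρ : 0 < ρ)
    (cmin cmax : ℝ) (hc0 : 0 < cmin) (hcc : cmin < cmax)
    (C : Ω → ℝ) (hC : ∀ ω, C ω = max (min (A * I ω / H ω) cmax) cmin) :
    ∫ ω, Real.exp (-(t * T * ρ) * C ω) ∂P =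
      Real.exp (-(t * T * ρ) * cmax) +
      (t * T * ρ) * ∫ u in (1 / cmax)..(1 / cmin),
        (u ^ 2)⁻¹ * Real.exp (-(t * T * ρ) / u) *
          ∫ ω, Real.exp (-(A * I ω * u)) ∂P := by
  have hle : cmin ≤ cmax := hcc.le
  set s : ℝ := t * T * ρ with hs_def
  have hs : 0 < s := by positivity
  set L : ℝ → ℝ := fun u => ∫ ω, Real.exp (-(A * I ω * u)) ∂P with hLdef
  set f : ℝ → Ω → ℝ := fun w ω => if A * I ω / H ω ≤ w then Real.exp (-(s * w)) else 0
    with hfdef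
  have hCge : ∀ ω, cmin ≤ C ω := fun ω => by rw [hC ω]; exact le_max_right _ _
  have hCm : Measurable C := by
    have h : C = fun ω => max (min (A * I ω / H ω) cmax) cmin := funext hC
    rw [h]; fun_prop
  -- pointwise value of the inner integral
  have hJ : ∀ ω, (∫ w in cmin..cmax, f w ω)
      = (Real.exp (-(s * C ω)) - Real.exp (-(s * cmax))) / s := by
    intro ω
    rw [hC ω]
    exact aux_ite s hs cmin cmax hc0 hcc _
  have hexpC : Integrable (fun ω => Real.exp (-(s * C ω))) P := by
    apply Integrable.mono' (integrable_const 1)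
    · exact (Real.measurable_exp.comp (by fun_prop : Measurable fun ω => -(s * C ω))).aestronglyMeasurable
    · apply ae_of_all
      intro ω
      rw [Real.norm_eq_abs, abs_of_pos (Real.exp_pos _)]
      apply Real.exp_le_one_iff.2
      have h1 := hCge ω
      nlinarith
  -- LHS in terms of the double integral
  have h1 : ∫ ω, (∫ w in cmin..cmax, f w ω) ∂P
      = ((∫ ω, Real.exp (-(s * C ω)) ∂P) - Real.exp (-(s * cmax))) / s := by
    rw [MeasureTheory.integral_congr_ae (ae_of_all _ hJ), MeasureTheory.integral_div,
      MeasureTheory.integral_sub hexpC (integrable_const _), MeasureTheory.integral_const]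
    simp
  -- Fubini
  haveI : IsFiniteMeasure (volume.restrict (Set.Ioc cmin cmax)) :=
    ⟨by rw [Measure.restrict_apply_univ]; exact measure_Ioc_lt_top⟩
  have hmeas_set : MeasurableSet {p : Ω × ℝ | A * I p.1 / H p.1 ≤ p.2} :=
    measurableSet_le (by fun_prop) measurable_snd
  have hFm : AEStronglyMeasurable (Function.uncurry fun ω w => f w ω)
      (P.prod (volume.restrict (Set.Ioc cmin cmax))) := by
    have h : (Function.uncurry fun ω w => f w ω)
        = {p : Ω × ℝ | A * I p.1 / H p.1 ≤ p.2}.indicator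
            (fun p => Real.exp (-(s * p.2))) := by
      funext p
      rcases p with ⟨ω, w⟩
      simp [Function.uncurry, hfdef, Set.indicator_apply, Set.mem_setOf_eq]
    rw [h]
    exact (((by fun_prop : Measurable fun p : Ω × ℝ => Real.exp (-(s * p.2)))).indicator
      hmeas_set).aestronglyMeasurable
  have hF : Integrable (Function.uncurry fun ω w => f w ω)
      (P.prod (volume.restrict (Set.Ioc cmin cmax))) := by
    apply Integrable.mono' (integrable_const 1) hFm
    have hres : P.prod (volume.restrict (Set.Ioc cmin cmax))
        = (P.prod volume).restrict (Set.univ ×ˢ Set.Ioc cmin cmax) := by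
      rw [← Measure.restrict_univ (μ := P), Measure.prod_restrict, Measure.restrict_univ]
    rw [hres]
    filter_upwards [ae_restrict_mem (MeasurableSet.univ.prod measurableSet_Ioc)] with p hp
    have hp2 : p.2 ∈ Set.Ioc cmin cmax := hp.2
    simp only [Function.uncurry, hfdef]
    split
    · rw [Real.norm_eq_abs, abs_of_pos (Real.exp_pos _)]
      apply Real.exp_le_one_iff.2
      have h2 : 0 < p.2 := hc0.trans hp2.1
      nlinarith
    · simp
  have hswap : ∫ ω, (∫ w in Set.Ioc cmin cmax, f w ω) ∂P
      = ∫ w in Set.Ioc cmin cmax, (∫ ω, f w ω ∂P) := integral_integral_swap hF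
  -- inner integral value
  have hinner : ∀ w ∈ Set.Ioc cmin cmax,
      (∫ ω, f w ω ∂P) = Real.exp (-(s * w)) * L (1 / w) := by
    intro w hw
    have hw0 : 0 < w := hc0.trans hw.1
    have hfw : (fun ω => f w ω)
        = {ω | A * I ω / H ω ≤ w}.indicator (fun _ => Real.exp (-(s * w))) := by
      funext ω
      simp [hfdef, Set.indicator_apply, Set.mem_setOf_eq]
    rw [hfw, MeasureTheory.integral_indicator_const _
      (measurableSet_le (by fun_prop) measurable_const)]
    rw [measureReal_def, tail_laplace P H I hH hI hexp hInonneg hind A hA w hw0,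
      ENNReal.toReal_ofReal (MeasureTheory.integral_nonneg fun ω => (Real.exp_pos _).le)]
    simp only [hLdef]
    rw [smul_eq_mul, mul_comm]
  -- substitution u = 1/w
  have hLcont : ContinuousOn L {u : ℝ | 0 < u} := by
    intro u hu
    apply ContinuousAt.continuousWithinAt
    apply MeasureTheory.continuousAt_of_dominated (bound := fun _ => (1:ℝ))
    · exact Filter.Eventually.of_forall fun u' =>
        (Real.measurable_exp.comp (by fun_prop)).aestronglyMeasurable
    · filter_upwards [lt_mem_nhds hu] with u' hu'
      apply ae_of_all
      intro ω
      rw [Real.norm_eq_abs, abs_of_pos (Real.exp_pos _)]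
      apply Real.exp_le_one_iff.2
      have h3 := hInonneg ω
      have h4 : (0:ℝ) < u' := hu'
      have h5 : 0 ≤ A * I ω * u' := mul_nonneg (mul_nonneg hA.le h3) h4.le
      linarith
    · exact integrable_const 1
    · exact ae_of_all _ fun ω =>
        (by fun_prop : Continuous fun u' => Real.exp (-(A * I ω * u'))).continuousAt
  set g : ℝ → ℝ := fun u => (u ^ 2)⁻¹ * Real.exp (-s / u) * L u with hgdef
  have huIcc : Set.uIcc cmin cmax = Set.Icc cmin cmax := Set.uIcc_of_le hle
  have hposIcc : ∀ x ∈ Set.uIcc cmin cmax, 0 < x := by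
    intro x hx
    rw [huIcc] at hx
    exact hc0.trans_le hx.1
  have hderiv : ∀ x ∈ Set.uIcc cmin cmax, HasDerivAt (fun y : ℝ => y⁻¹) (-((x ^ 2)⁻¹)) x :=
    fun x hx => hasDerivAt_inv (hposIcc x hx).ne'
  have hcont' : ContinuousOn (fun x : ℝ => -((x ^ 2)⁻¹)) (Set.uIcc cmin cmax) := by
    apply ContinuousOn.neg
    apply ContinuousOn.inv₀ (continuous_pow 2).continuousOn
    intro x hx
    have := hposIcc x hx
    positivity
  have hgcont : ContinuousOn g ((fun y : ℝ => y⁻¹) '' Set.uIcc cmin cmax) := by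
    have himg : ((fun y : ℝ => y⁻¹) '' Set.uIcc cmin cmax) ⊆ {u : ℝ | 0 < u} := by
      rintro _ ⟨x, hx, rfl⟩
      exact inv_pos.2 (hposIcc x hx)
    apply ContinuousOn.mono _ himg
    apply ContinuousOn.mul
    apply ContinuousOn.mul
    · apply ContinuousOn.inv₀ (continuous_pow 2).continuousOn
      intro u hu
      have : (0:ℝ) < u := hu
      positivity
    · apply Real.continuous_exp.comp_continuousOn
      apply ContinuousOn.div continuousOn_const continuousOn_id
      intro u hu
      exact (show (0:ℝ) < u from hu).ne'
    · exact hLcont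
  have key := intervalIntegral.integral_comp_smul_deriv' (a := cmin) (b := cmax)
    (f := fun y : ℝ => y⁻¹) (f' := fun x : ℝ => -((x ^ 2)⁻¹)) (g := g)
    hderiv hcont' hgcont
  have hpt : ∀ x ∈ Set.uIcc cmin cmax,
      Real.exp (-(s * x)) * L (1 / x) = -((-((x ^ 2)⁻¹)) • ((g ∘ fun y : ℝ => y⁻¹) x)) := by
    intro x hx
    have hx0 : 0 < x := hposIcc x hx
    simp only [Function.comp, hgdef, smul_eq_mul]
    rw [one_div]
    have hx2 : ((x⁻¹) ^ 2)⁻¹ = x ^ 2 := by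
      rw [← inv_pow, inv_inv]
    rw [hx2]
    have hdiv : -s / x⁻¹ = -(s * x) := by
      field_simp
    rw [hdiv]
    field_simp
  have hsub : ∫ w in cmin..cmax, Real.exp (-(s * w)) * L (1 / w)
      = ∫ u in (1 / cmax)..(1 / cmin), g u := by
    rw [intervalIntegral.integral_congr hpt, intervalIntegral.integral_neg, key,
      ← intervalIntegral.integral_symm]
    simp [one_div]
  -- assemble
  simp only [neg_mul]
  have hmain : ∫ ω, (∫ w in cmin..cmax, f w ω) ∂P
      = ∫ u in (1 / cmax)..(1 / cmin), g u := by
    have e1 : ∀ ω, (∫ w in cmin..cmax, f w ω) = ∫ w in Set.Ioc cmin cmax, f w ω :=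
      fun ω => intervalIntegral.integral_of_le hle
    rw [MeasureTheory.integral_congr_ae (ae_of_all _ e1), hswap,
      MeasureTheory.setIntegral_congr_fun measurableSet_Ioc hinner,
      ← intervalIntegral.integral_of_le hle, hsub]
  rw [hmain] at h1
  have hfinal : ∫ ω, Real.exp (-(s * C ω)) ∂P
      = Real.exp (-(s * cmax)) + s * ∫ u in (1 / cmax)..(1 / cmin), g u := by
    rw [h1]
    field_simp
    ring
  simpa only [hgdef, hLdef] using hfinal
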